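/- Fix d ≥ 1 and, for each coordinate j ∈ {1,…,d}, a nonempty finite set of grid thresholds T_j ⊂ ℝ. Let F = ⋃_{i=1}^N ∏_{j=1}^d [a_{ij}, b_{ij}] be a finite union of nonempty closed axis-aligned boxes all of whose endpoints lie on the grid, i.e. a_{ij} ∈ T_j, b_{ij} ∈ T_j, and a_{ij} ≤ b_{ij} for all i, j. Suppose B = ∏_{j=1}^d [u_j, v_j] (with u_j ≤ v_j for all j) is a nonempty closed axis-aligned box with B ⊆ F that is maximal with respect to inclusion among closed axis-aligned boxes contained in F (i.e. any closed axis-aligned box B′ with B ⊆ B′ ⊆ F satisfies B′ = B). Then every endpoint of B lies on the grid: u_j ∈ T_j and v_j ∈ T_j for all j ∈ {1,…,d}. -/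
import Mathlib


open Set

/-- If `F` is a finite union of nonempty closed axis-aligned boxes whose endpoints lie
on a per-coordinate grid `T j`, then any inclusion-maximal closed axis-aligned box
`B = ∏ j [u j, v j] ⊆ F` has all of its endpoints on the grid. -/
theorem maximal_box_in_union_of_grid_boxes_has_grid_endpoints
    (d : ℕ) (hd : 1 ≤ d)
    (T : Fin d → Finset ℝ) (hT : ∀ j, (T j).Nonempty)
    (N : ℕ) (a b : Fin N → Fin d → ℝ)
    (ha : ∀ i j, a i j ∈ T j) (hb : ∀ i j, b i j ∈ T j)
    (hab : ∀ i j, a i j ≤ b i j)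
    (F : Set (Fin d → ℝ))
    (hF : F = ⋃ i : Fin N, univ.pi (fun j => Icc (a i j) (b i j)))
    (u v : Fin d → ℝ) (huv : ∀ j, u j ≤ v j)
    (hBF : univ.pi (fun j => Icc (u j) (v j)) ⊆ F)
    (hmax : ∀ u' v' : Fin d → ℝ,
      univ.pi (fun j => Icc (u j) (v j)) ⊆ univ.pi (fun j => Icc (u' j) (v' j)) →
      univ.pi (fun j => Icc (u' j) (v' j)) ⊆ F →
      univ.pi (fun j => Icc (u' j) (v' j)) = univ.pi (fun j => Icc (u j) (v j))) :
    ∀ j, u j ∈ T j ∧ v j ∈ T j := by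
  intro j
  have hmem : ∀ p q x : Fin d → ℝ, x ∈ univ.pi (fun k => Icc (p k) (q k)) ↔
      ∀ k, p k ≤ x k ∧ x k ≤ q k := by
    intro p q x
    simp only [Set.mem_pi, Set.mem_univ, Set.mem_Icc, forall_true_left]
  have hmemF : ∀ x : Fin d → ℝ, x ∈ F ↔
      ∃ i, ∀ k, a i k ≤ x k ∧ x k ≤ b i k := by
    intro x; rw [hF]
    simp only [mem_iUnion, Set.mem_pi, Set.mem_univ, Set.mem_Icc, forall_true_left]
  constructor
  · by_contra hu
    -- there is a grid point strictly below u j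
    have huF : u ∈ F := hBF ((hmem u v u).2 (fun k => ⟨le_rfl, huv k⟩))
    obtain ⟨i0, hi0⟩ := (hmemF u).1 huF
    have hS : ((T j).filter (· < u j)).Nonempty := by
      refine ⟨a i0 j, Finset.mem_filter.2 ⟨ha i0 j, ?_⟩⟩
      exact lt_of_le_of_ne (hi0 j).1 (fun h => hu (h ▸ ha i0 j))
    set w := ((T j).filter (· < u j)).max' hS with hw
    have hwT : w ∈ T j ∧ w < u j := by
      have := ((T j).filter (· < u j)).max'_mem hS
      exact ⟨(Finset.mem_filter.1 this).1, (Finset.mem_filter.1 this).2⟩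
    have hwmax : ∀ t ∈ T j, t < u j → t ≤ w := fun t ht hlt =>
      Finset.le_max' ((T j).filter (· < u j)) t (Finset.mem_filter.2 ⟨ht, hlt⟩)
    set u' := Function.update u j w with hu'
    have hsub : univ.pi (fun k => Icc (u k) (v k)) ⊆
        univ.pi (fun k => Icc (u' k) (v k)) := by
      intro x hx
      rw [hmem u v] at hx
      refine (hmem u' v x).2 (fun k => ⟨?_, (hx k).2⟩)
      by_cases hk : k = j
      · subst hk; rw [hu', Function.update_self]
        exact le_trans hwT.2.le (hx k).1
      · rw [hu', Function.update_of_ne hk]; exact (hx k).1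
    have hsubF : univ.pi (fun k => Icc (u' k) (v k)) ⊆ F := by
      intro y hy
      rw [hmem u' v] at hy
      by_cases hyj : u j ≤ y j
      · exact hBF ((hmem u v y).2 (fun k => by
          refine ⟨?_, (hy k).2⟩
          by_cases hk : k = j
          · subst hk; exact hyj
          · have := (hy k).1; rwa [hu', Function.update_of_ne hk] at this))
      · push_neg at hyj
        set y' := Function.update y j (u j) with hy'
        have hy'B : y' ∈ F := by
          refine hBF ((hmem u v y').2 (fun k => ?_))
          by_cases hk : k = j
          · subst hk; rw [hy', Function.update_self]; exact ⟨le_rfl, huv k⟩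
          · rw [hy', Function.update_of_ne hk]
            have := (hy k).1; rw [hu', Function.update_of_ne hk] at this
            exact ⟨this, (hy k).2⟩
        obtain ⟨i, hi⟩ := (hmemF y').1 hy'B
        refine (hmemF y).2 ⟨i, fun k => ?_⟩
        by_cases hk : k = j
        · subst hk
          have haj : a i k ≤ u k := by
            have := (hi k).1; rwa [hy', Function.update_self] at this
          have haj' : a i k < u k := lt_of_le_of_ne haj (fun h => hu (h ▸ ha i k))
          have hbj : u k ≤ b i k := by
            have := (hi k).2; rwa [hy', Function.update_self] at this
          have h1 : a i k ≤ y k := le_trans (hwmax _ (ha i k) haj') (by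
            have := (hy k).1; rwa [hu', Function.update_self] at this)
          exact ⟨h1, le_trans hyj.le hbj⟩
        · have h1 := (hi k).1; have h2 := (hi k).2
          rw [hy', Function.update_of_ne hk] at h1 h2
          exact ⟨h1, h2⟩
    have heq := hmax u' v hsub hsubF
    have : (Function.update u j w) ∈ univ.pi (fun k => Icc (u k) (v k)) := by
      rw [← heq]
      refine (hmem u' v _).2 (fun k => ?_)
      by_cases hk : k = j
      · subst hk; simp only [hu', Function.update_self]
        exact ⟨le_rfl, le_trans hwT.2.le (huv k)⟩
      · simp only [hu', Function.update_of_ne hk]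
        exact ⟨le_rfl, huv k⟩
    have := ((hmem u v _).1 this j).1
    rw [Function.update_self] at this
    exact absurd this (not_le.2 hwT.2)
  · by_contra hv
    have hvF : v ∈ F := hBF ((hmem u v v).2 (fun k => ⟨huv k, le_rfl⟩))
    obtain ⟨i0, hi0⟩ := (hmemF v).1 hvF
    have hS : ((T j).filter (v j < ·)).Nonempty := by
      refine ⟨b i0 j, Finset.mem_filter.2 ⟨hb i0 j, ?_⟩⟩
      exact lt_of_le_of_ne (hi0 j).2 (fun h => hv (h ▸ hb i0 j))
    set w := ((T j).filter (v j < ·)).min' hS with hw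
    have hwT : w ∈ T j ∧ v j < w := by
      have := ((T j).filter (v j < ·)).min'_mem hS
      exact ⟨(Finset.mem_filter.1 this).1, (Finset.mem_filter.1 this).2⟩
    have hwmin : ∀ t ∈ T j, v j < t → w ≤ t := fun t ht hlt =>
      Finset.min'_le ((T j).filter (v j < ·)) t (Finset.mem_filter.2 ⟨ht, hlt⟩)
    set v' := Function.update v j w with hv'
    have hsub : univ.pi (fun k => Icc (u k) (v k)) ⊆
        univ.pi (fun k => Icc (u k) (v' k)) := by
      intro x hx
      rw [hmem u v] at hx
      refine (hmem u v' x).2 (fun k => ⟨(hx k).1, ?_⟩)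
      by_cases hk : k = j
      · subst hk; rw [hv', Function.update_self]
        exact le_trans (hx k).2 hwT.2.le
      · rw [hv', Function.update_of_ne hk]; exact (hx k).2
    have hsubF : univ.pi (fun k => Icc (u k) (v' k)) ⊆ F := by
      intro y hy
      rw [hmem u v'] at hy
      by_cases hyj : y j ≤ v j
      · exact hBF ((hmem u v y).2 (fun k => by
          refine ⟨(hy k).1, ?_⟩
          by_cases hk : k = j
          · subst hk; exact hyj
          · have := (hy k).2; rwa [hv', Function.update_of_ne hk] at this))
      · push_neg at hyj
        set y' := Function.update y j (v j) with hy'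
        have hy'B : y' ∈ F := by
          refine hBF ((hmem u v y').2 (fun k => ?_))
          by_cases hk : k = j
          · subst hk; rw [hy', Function.update_self]; exact ⟨huv k, le_rfl⟩
          · rw [hy', Function.update_of_ne hk]
            have := (hy k).2; rw [hv', Function.update_of_ne hk] at this
            exact ⟨(hy k).1, this⟩
        obtain ⟨i, hi⟩ := (hmemF y').1 hy'B
        refine (hmemF y).2 ⟨i, fun k => ?_⟩
        by_cases hk : k = j
        · subst hk
          have hbj : v k ≤ b i k := by
            have := (hi k).2; rwa [hy', Function.update_self] at this
          have hbj' : v k < b i k := lt_of_le_of_ne hbj (fun h => hv (h ▸ hb i k))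
          have haj : a i k ≤ v k := by
            have := (hi k).1; rwa [hy', Function.update_self] at this
          have h2 : y k ≤ b i k := le_trans (by
            have := (hy k).2; rwa [hv', Function.update_self] at this)
            (hwmin _ (hb i k) hbj')
          exact ⟨le_trans haj hyj.le, h2⟩
        · have h1 := (hi k).1; have h2 := (hi k).2
          rw [hy', Function.update_of_ne hk] at h1 h2
          exact ⟨h1, h2⟩
    have heq := hmax u v' hsub hsubF
    have : (Function.update v j w) ∈ univ.pi (fun k => Icc (u k) (v k)) := by
      rw [← heq]
      refine (hmem u v' _).2 (fun k => ?_)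
      by_cases hk : k = j
      · subst hk; simp only [hv', Function.update_self]
        exact ⟨le_trans (huv k) hwT.2.le, le_rfl⟩
      · simp only [hv', Function.update_of_ne hk]
        exact ⟨huv k, le_rfl⟩
    have := ((hmem u v _).1 this j).2
    rw [Function.update_self] at this
    exact absurd this (not_le.2 hwT.2)
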